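/- arXiv:1512.06937 — 5 statements merged into one kernel-verified Lean document; each statement's English description precedes it below -/
import Mathlib

section
/- For all integers n ≥ r ≥ 2 and c ≤ r, we have n^r/r! - (c + (r-1)/2)·n^{r-1}/(r-1)! ≤ C(n-c, r) ≤ n^r/r! - (c + (r-1)/2)·n^{r-1}/(r-1)! + 4r^4·n^{r-2}. -/
open Finset

lemma prod_nonneg_aux (n : ℚ) (a : ℕ → ℚ) (k : ℕ) (ha : ∀ i ∈ range k, a i ≤ n) :
    0 ≤ ∏ i ∈ range k, (n - a i) :=
  Finset.prod_nonneg fun i hi => by linarith [ha i hi]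

lemma low_bound (n : ℚ) (hn : 0 ≤ n) (a : ℕ → ℚ) (k : ℕ)
    (ha : ∀ i ∈ range k, 0 ≤ a i ∧ a i ≤ n) :
    n ^ (k+1) - (∑ i ∈ range k, a i) * n ^ k ≤ n * ∏ i ∈ range k, (n - a i) := by
  induction k with
  | zero => simp
  | succ k ih =>
    have ha' : ∀ i ∈ range k, 0 ≤ a i ∧ a i ≤ n := fun i hi => ha i (by simp at hi ⊢; omega)
    have hk := ha k (self_mem_range_succ k)
    have hP : 0 ≤ ∏ i ∈ range k, (n - a i) := prod_nonneg_aux n a k fun i hi => (ha' i hi).2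
    rw [Finset.prod_range_succ, Finset.sum_range_succ]
    have hfac : (0:ℚ) ≤ n - a k := by linarith [hk.2]
    have e1 : n ^ (k+1) = n ^ k * n := pow_succ n k
    have e2 : n ^ (k+1+1) = n ^ k * n * n := by rw [pow_succ, pow_succ]
    have hS0 : (0:ℚ) ≤ ∑ i ∈ range k, a i := Finset.sum_nonneg fun i hi => (ha' i hi).1
    have hnk : (0:ℚ) ≤ n ^ k := pow_nonneg hn k
    rw [e1, e2]
    by_cases hS : (∑ i ∈ range k, a i) ≤ n
    · have h1 : (n ^ (k+1) - (∑ i ∈ range k, a i) * n ^ k) * (n - a k)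
          ≤ (n * ∏ i ∈ range k, (n - a i)) * (n - a k) :=
        mul_le_mul_of_nonneg_right (ih ha') hfac
      rw [e1] at h1
      nlinarith [mul_nonneg (mul_nonneg hk.1 hS0) hnk]
    · push_neg at hS
      have h2 : (0:ℚ) ≤ n * ((∏ i ∈ range k, (n - a i)) * (n - a k)) :=
        mul_nonneg hn (mul_nonneg hP hfac)
      have h3 : (0:ℚ) ≤ n ^ k * n * ((∑ i ∈ range k, a i) - n) :=
        mul_nonneg (mul_nonneg hnk hn) (by linarith)
      have h4 : (0:ℚ) ≤ a k * (n ^ k * n) := mul_nonneg hk.1 (mul_nonneg hnk hn)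
      nlinarith [h3, h4]

lemma up_bound (n : ℚ) (hn : 0 ≤ n) (a : ℕ → ℚ) (k : ℕ)
    (ha : ∀ i ∈ range k, 0 ≤ a i ∧ a i ≤ n) :
    n ^ 2 * ∏ i ∈ range k, (n - a i)
      ≤ n ^ (k+2) - (∑ i ∈ range k, a i) * n ^ (k+1) + (∑ i ∈ range k, a i) ^ 2 * n ^ k := by
  induction k with
  | zero => simp
  | succ k ih =>
    have ha' : ∀ i ∈ range k, 0 ≤ a i ∧ a i ≤ n := fun i hi => ha i (by simp at hi ⊢; omega)
    have hk := ha k (self_mem_range_succ k)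
    have hfac : (0:ℚ) ≤ n - a k := by linarith [hk.2]
    rw [Finset.prod_range_succ, Finset.sum_range_succ]
    have h1 : (n ^ 2 * ∏ i ∈ range k, (n - a i)) * (n - a k)
        ≤ (n ^ (k+2) - (∑ i ∈ range k, a i) * n ^ (k+1) + (∑ i ∈ range k, a i) ^ 2 * n ^ k) * (n - a k) :=
      mul_le_mul_of_nonneg_right (ih ha') hfac
    have hS : (0:ℚ) ≤ ∑ i ∈ range k, a i := Finset.sum_nonneg fun i hi => (ha' i hi).1
    have hnk : (0:ℚ) ≤ n ^ k := pow_nonneg hn k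
    have e1 : n ^ (k+1) = n ^ k * n := pow_succ n k
    have e2 : n ^ (k+2) = n ^ k * n * n := by ring
    have e3 : n ^ (k+1+2) = n ^ k * n * n * n := by ring
    have e4 : n ^ (k+1+1) = n ^ k * n * n := by ring
    rw [e1, e2] at h1
    rw [e3, e4, e1]
    nlinarith [mul_nonneg (mul_nonneg (mul_nonneg hk.1 hS) hnk) hn,
      mul_nonneg (mul_nonneg (mul_nonneg hk.1 hk.1) hnk) hn,
      mul_nonneg (mul_nonneg (mul_nonneg hk.1 hS) hS) hnk]

set_option maxHeartbeats 1000000 in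
theorem binomial_estimate (n r c : ℕ) (hrn : r ≤ n) (hr : 2 ≤ r) (hc : c ≤ r) :
    (n : ℚ) ^ r / r.factorial - ((c : ℚ) + ((r : ℚ) - 1) / 2) / (r - 1).factorial * (n : ℚ) ^ (r - 1)
      ≤ ((n - c).choose r : ℚ) ∧
    ((n - c).choose r : ℚ)
      ≤ (n : ℚ) ^ r / r.factorial - ((c : ℚ) + ((r : ℚ) - 1) / 2) / (r - 1).factorial * (n : ℚ) ^ (r - 1)
        + 4 * (r : ℚ) ^ 4 * (n : ℚ) ^ (r - 2) := by
  have hn0 : (0:ℚ) < n := by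
    have : 0 < n := by omega
    exact_mod_cast this
  have hR2 : (2:ℚ) ≤ r := by exact_mod_cast hr
  have hRn : (r:ℚ) ≤ n := by exact_mod_cast hrn
  have hCR : (c:ℚ) ≤ r := by exact_mod_cast hc
  have hC0 : (0:ℚ) ≤ c := Nat.cast_nonneg c
  set F : ℚ := (r.factorial : ℚ) with hFdef
  set F1 : ℚ := ((r-1).factorial : ℚ) with hF1def
  have hF1ge : (1:ℚ) ≤ F1 := by
    rw [hF1def]
    have : 1 ≤ (r-1).factorial := (r-1).factorial_pos
    exact_mod_cast this
  have hF1pos : (0:ℚ) < F1 := by linarith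
  have hFmul : F = r * F1 := by
    have := Nat.mul_factorial_pred (show r ≠ 0 by omega)
    rw [hFdef, hF1def, ← this]; push_cast; ring
  have hFpos : (0:ℚ) < F := by rw [hFmul]; positivity
  have hFge : (1:ℚ) ≤ F := by nlinarith
  set S : ℚ := r * c + r * ((r:ℚ) - 1) / 2 with hSdef
  have hS0 : 0 ≤ S := by rw [hSdef]; nlinarith
  have hS2r : S ≤ 2 * (r:ℚ)^2 := by rw [hSdef]; nlinarith
  have hSum : ∑ i ∈ Finset.range r, ((c:ℚ) + i) = S := by
    rw [Finset.sum_add_distrib, Finset.sum_const, Finset.card_range]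
    have g := Finset.sum_range_id_mul_two r
    have g2 : ((∑ i ∈ Finset.range r, i : ℕ) : ℚ) * 2 = (r:ℚ) * ((r:ℚ) - 1) := by
      have := congrArg (fun x : ℕ => (x : ℚ)) g
      push_cast [Nat.cast_sub (show 1 ≤ r by omega)] at this
      simpa using this
    push_cast at g2
    have g3 : (∑ i ∈ Finset.range r, (i:ℚ)) = (r:ℚ) * ((r:ℚ) - 1) / 2 := by linarith
    rw [g3, hSdef, nsmul_eq_mul]
    try ring
  have hgoal : (n : ℚ) ^ r / F - ((c : ℚ) + ((r : ℚ) - 1) / 2) / F1 * (n : ℚ) ^ (r - 1)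
      = ((n:ℚ)^r - S * (n:ℚ)^(r-1)) / F := by
    rw [hFmul, hSdef]
    have hRne : (r:ℚ) ≠ 0 := by linarith
    field_simp
  have e2 : (n:ℚ)^r = (n:ℚ)^(r-1) * n := by
    rw [← pow_succ]; congr 1; omega
  have e3 : (n:ℚ)^(r-1) = (n:ℚ)^(r-2) * n := by
    rw [← pow_succ]; congr 1; omega
  have hnr2 : (0:ℚ) ≤ (n:ℚ)^(r-2) := by positivity
  have hnr1 : (0:ℚ) ≤ (n:ℚ)^(r-1) := by positivity
  have hSsq : S^2 ≤ 4*(r:ℚ)^4 := by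
    calc S^2 = S*S := sq S
      _ ≤ (2*(r:ℚ)^2)*(2*(r:ℚ)^2) := mul_le_mul hS2r hS2r hS0 (by positivity)
      _ = 4*(r:ℚ)^4 := by ring
  have hslack : S^2 * (n:ℚ)^(r-2) ≤ 4*(r:ℚ)^4 * (n:ℚ)^(r-2) :=
    mul_le_mul_of_nonneg_right hSsq hnr2
  have hF4 : 4*(r:ℚ)^4 * (n:ℚ)^(r-2) ≤ 4*(r:ℚ)^4 * (n:ℚ)^(r-2) * F := by
    nlinarith [mul_nonneg (mul_nonneg (show (0:ℚ) ≤ 4*(r:ℚ)^4 by positivity) hnr2)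
      (show (0:ℚ) ≤ F - 1 by linarith)]
  by_cases hcase : c + r ≤ n
  · -- main case
    set P : ℚ := ∏ i ∈ Finset.range r, ((n:ℚ) - ((c:ℚ) + i)) with hPdef
    have h1 : (((n-c).descFactorial r : ℕ) : ℚ) = P := by
      rw [Nat.descFactorial_eq_prod_range, Nat.cast_prod, hPdef]
      refine Finset.prod_congr rfl fun i hi => ?_
      simp only [Finset.mem_range] at hi
      have hi' : i ≤ n - c := by omega
      rw [Nat.cast_sub hi', Nat.cast_sub (show c ≤ n by omega)]
      ring
    have h2 : ((n-c).choose r : ℚ) * F = P := by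
      rw [← h1, Nat.descFactorial_eq_factorial_mul_choose, hFdef]
      push_cast; ring
    have ha : ∀ i ∈ Finset.range r, 0 ≤ (c:ℚ) + i ∧ (c:ℚ) + i ≤ n := by
      intro i hi
      simp only [Finset.mem_range] at hi
      refine ⟨add_nonneg (Nat.cast_nonneg c) (Nat.cast_nonneg i), ?_⟩
      have h : c + i + 1 ≤ n := by omega
      have h' : ((c + i + 1 : ℕ) : ℚ) ≤ n := by exact_mod_cast h
      push_cast at h'; linarith
    have low := low_bound (n:ℚ) (le_of_lt hn0) (fun i => (c:ℚ) + i) r ha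
    have up := up_bound (n:ℚ) (le_of_lt hn0) (fun i => (c:ℚ) + i) r ha
    rw [hSum] at low up
    rw [← hPdef] at low up
    have e1 : (n:ℚ)^(r+1) = (n:ℚ)^r * n := pow_succ _ _
    have e4 : (n:ℚ)^(r+2) = (n:ℚ)^r * n * n := by ring
    have elow : (n:ℚ)^r - S * (n:ℚ)^(r-1) ≤ P := by
      refine le_of_mul_le_mul_right ?_ hn0
      rw [e1, e2] at low
      rw [e2]
      linarith [low]
    have eup : P ≤ (n:ℚ)^r - S * (n:ℚ)^(r-1) + S^2 * (n:ℚ)^(r-2) := by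
      have h : P * ((n:ℚ) * (n:ℚ))
          ≤ ((n:ℚ)^r - S * (n:ℚ)^(r-1) + S^2 * (n:ℚ)^(r-2)) * ((n:ℚ) * (n:ℚ)) := by
        rw [e4, e1, e2, e3] at up
        rw [e2, e3]
        linarith [up]
      exact le_of_mul_le_mul_right h (mul_pos hn0 hn0)
    have hch : ((n-c).choose r : ℚ) = P / F := by
      rw [← h2]; field_simp
    constructor
    · rw [hgoal, div_le_iff₀ hFpos, h2]
      exact elow
    · rw [hgoal, hch, div_le_iff₀ hFpos]
      have expand : (((n:ℚ)^r - S * (n:ℚ)^(r-1)) / F + 4 * (r:ℚ)^4 * (n:ℚ)^(r-2)) * F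
          = ((n:ℚ)^r - S * (n:ℚ)^(r-1)) + 4 * (r:ℚ)^4 * (n:ℚ)^(r-2) * F := by
        field_simp
      rw [expand]
      linarith [eup, hslack, hF4]
  · -- degenerate case : (n - c) < r, choose = 0
    have hch : (n - c).choose r = 0 := Nat.choose_eq_zero_of_lt (by omega)
    rw [hch]
    have hnS : (n:ℚ) ≤ S := by
      have h1 : (n:ℚ) ≤ c + r - 1 := by
        have h : n ≤ c + r - 1 := by omega
        have h' := (Nat.cast_le (α := ℚ)).2 h
        push_cast [Nat.cast_sub (show 1 ≤ c + r by omega)] at h'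
        linarith
      rw [hSdef]
      nlinarith
    have hn2r : (n:ℚ) ≤ 2 * r := by
      have : n ≤ 2 * r := by omega
      exact_mod_cast this
    constructor
    · rw [Nat.cast_zero, hgoal, div_le_iff₀ hFpos, zero_mul, e2]
      nlinarith [mul_le_mul_of_nonneg_left hnS hnr1]
    · rw [Nat.cast_zero, hgoal]
      have key : S * (n:ℚ)^(r-1) ≤ (n:ℚ)^r + 4 * (r:ℚ)^4 * (n:ℚ)^(r-2) * F := by
      
        have hSn : S * n ≤ 4 * (r:ℚ)^3 := by
          calc S * (n:ℚ) ≤ 2*(r:ℚ)^2 * n := mul_le_mul_of_nonneg_right hS2r hn0.le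
            _ ≤ 2*(r:ℚ)^2 * (2*r) := mul_le_mul_of_nonneg_left hn2r (by positivity)
            _ = 4 * (r:ℚ)^3 := by ring
        have h2 : S * (n:ℚ)^(r-2) * n ≤ 4 * (r:ℚ)^3 * (n:ℚ)^(r-2) := by
          calc S * (n:ℚ)^(r-2) * n = (S * n) * (n:ℚ)^(r-2) := by ring
            _ ≤ (4 * (r:ℚ)^3) * (n:ℚ)^(r-2) := mul_le_mul_of_nonneg_right hSn hnr2
        have h3 : 4 * (r:ℚ)^3 * (n:ℚ)^(r-2) ≤ 4 * (r:ℚ)^4 * (n:ℚ)^(r-2) * F := by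
          nlinarith [mul_nonneg (mul_nonneg (show (0:ℚ) ≤ 4*(r:ℚ)^3 by positivity) hnr2)
            (show (0:ℚ) ≤ (r:ℚ)*F - 1 by nlinarith)]
        have h4 : (0:ℚ) ≤ (n:ℚ)^r := by positivity
        calc S * (n:ℚ)^(r-1) = S * (n:ℚ)^(r-2) * n := by rw [e3]; ring
          _ ≤ 4 * (r:ℚ)^3 * (n:ℚ)^(r-2) := h2
          _ ≤ 4 * (r:ℚ)^4 * (n:ℚ)^(r-2) * F := h3
          _ ≤ (n:ℚ)^r + 4 * (r:ℚ)^4 * (n:ℚ)^(r-2) * F := by linarith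
      have eqq : ((n:ℚ)^r - S * (n:ℚ)^(r-1)) / F + 4 * (r:ℚ)^4 * (n:ℚ)^(r-2)
          = ((n:ℚ)^r - S * (n:ℚ)^(r-1) + 4 * (r:ℚ)^4 * (n:ℚ)^(r-2) * F) / F := by
        field_simp
      rw [eqq]
      exact div_nonneg (by linarith [key]) hFpos.le
end

section
/- For any graph G on N vertices, the bandwidth of G satisfies B(G) ≤ N - ⌊β(G)/2⌋, where β(G) is the maximum size of an independent set in G. -/
theorem bandwidth_le_of_independent (N : ℕ) (G : SimpleGraph (Fin N))
    [DecidableRel G.Adj]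
    (S : Finset (Fin N)) (hS : ∀ v ∈ S, ∀ w ∈ S, ¬ G.Adj v w)
    (hmax : ∀ T : Finset (Fin N), (∀ v ∈ T, ∀ w ∈ T, ¬ G.Adj v w) → T.card ≤ S.card) :
    ∃ f : Fin N ≃ Fin N, ∀ v w : Fin N, G.Adj v w →
      ((f v : ℤ) - (f w : ℤ)).natAbs ≤ N - S.card / 2 := by
  classical
  set k := S.card / 2 with hk
  have hScard : S.card ≤ N := by
    simpa using Finset.card_le_univ S
  obtain ⟨A, hAS, hA⟩ := S.exists_subset_card_eq (n := k) (Nat.div_le_self _ _)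
  obtain ⟨B, hBSA, hB⟩ := (S \ A).exists_subset_card_eq (n := k)
    (by rw [Finset.card_sdiff_of_subset hAS, hA]; omega)
  have hBS : B ⊆ S := hBSA.trans (Finset.sdiff_subset)
  have hABdisj : Disjoint A B := by
    refine Finset.disjoint_left.mpr ?_
    intro a ha hb
    exact (Finset.mem_sdiff.mp (hBSA hb)).2 ha
  set M : Finset (Fin N) := Finset.univ \ (A ∪ B) with hM
  set l1 := A.sort (· ≤ ·) with hl1
  set l2 := M.sort (· ≤ ·) with hl2
  set l3 := B.sort (· ≤ ·) with hl3
  set L := l1 ++ l2 ++ l3 with hL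
  have hmem1 : ∀ x, x ∈ l1 ↔ x ∈ A := fun x => Finset.mem_sort _
  have hmem2 : ∀ x, x ∈ l2 ↔ x ∈ M := fun x => Finset.mem_sort _
  have hmem3 : ∀ x, x ∈ l3 ↔ x ∈ B := fun x => Finset.mem_sort _
  have nd : L.Nodup := by
    refine List.Nodup.append (List.Nodup.append (Finset.sort_nodup _ _)
      (Finset.sort_nodup _ _) ?_) (Finset.sort_nodup _ _) ?_
    · intro a ha hb
      have := (hmem2 a).mp hb
      simp [hM] at this
      exact this.1 ((hmem1 a).mp ha)
    · intro a ha hb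
      have hb' := (hmem3 a).mp hb
      rcases List.mem_append.mp ha with h1 | h2
      · exact Finset.disjoint_left.mp hABdisj ((hmem1 a).mp h1) hb'
      · have := (hmem2 a).mp h2
        simp [hM] at this
        exact this.2 hb'
  have hmemL : ∀ x, x ∈ L := by
    intro x
    by_cases hxA : x ∈ A
    · exact List.mem_append.mpr (Or.inl (List.mem_append.mpr (Or.inl ((hmem1 x).mpr hxA))))
    by_cases hxB : x ∈ B
    · exact List.mem_append.mpr (Or.inr ((hmem3 x).mpr hxB))
    · refine List.mem_append.mpr (Or.inl (List.mem_append.mpr (Or.inr ((hmem2 x).mpr ?_))))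
      simp [hM, hxA, hxB]
  have hlen1 : l1.length = k := by rw [hl1, Finset.length_sort, hA]
  have hlen3 : l3.length = k := by rw [hl3, Finset.length_sort, hB]
  have hcardM : M.card = N - 2 * k := by
    rw [hM, Finset.card_sdiff_of_subset (Finset.subset_univ _),
      Finset.card_union_of_disjoint hABdisj, hA, hB]
    have h2k : 2 * k ≤ S.card := by omega
    simp [Fintype.card_fin]
    omega
  have hlen12 : (l1 ++ l2).length = N - k := by
    rw [List.length_append, hlen1, hl2, Finset.length_sort, hcardM]
    omega
  have hlenL : L.length = N := by
    rw [hL, List.length_append, hlen12, hlen3]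
    omega
  let e := nd.getEquivOfForallMemList L hmemL
  refine ⟨e.symm.trans (finCongr hlenL), ?_⟩
  have hidx : ∀ v : Fin N, ((e.symm.trans (finCongr hlenL)) v : ℕ) = L.idxOf v := by
    intro v; rfl
  -- key index bounds
  have idx_lt : ∀ v : Fin N, L.idxOf v < N := by
    intro v
    have := List.idxOf_lt_length_iff.mpr (hmemL v)
    omega
  have idx_notB : ∀ v : Fin N, v ∉ B → L.idxOf v < N - k := by
    intro v hv
    have hv' : v ∈ l1 ++ l2 := by
      rcases List.mem_append.mp (hmemL v) with h | h
      · exact h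
      · exact absurd ((hmem3 v).mp h) hv
    rw [hL, List.idxOf_append_of_mem hv', ← hlen12]
    exact List.idxOf_lt_length_iff.mpr hv'
  have idx_notA : ∀ v : Fin N, v ∉ A → k ≤ L.idxOf v := by
    intro v hv
    by_cases h12 : v ∈ l1 ++ l2
    · have hv2 : v ∉ l1 := fun h => hv ((hmem1 v).mp h)
      have hv2' : v ∈ l2 := by rcases List.mem_append.mp h12 with h | h; exact absurd h hv2; exact h
      rw [hL, List.idxOf_append_of_mem h12, List.idxOf_append_of_notMem hv2, hlen1]
      omega
    · rw [hL, List.idxOf_append_of_notMem h12, hlen12]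
      omega
  -- main one-sided bound
  have main : ∀ v w : Fin N, G.Adj v w → (L.idxOf v : ℤ) - L.idxOf w ≤ N - 1 - k := by
    intro v w hadj
    have hN2 : 2 ≤ N := by
      have hv := v.2
      have hw := w.2
      by_contra h
      exact hadj.ne (Fin.ext (by omega))
    have hkN : k ≤ N - 1 := by
      have : 2 * k ≤ S.card := by omega
      omega
    by_cases hvB : v ∈ B
    · have hwS : w ∉ S := fun hw => hS v (hBS hvB) w hw hadj
      have hwA : w ∉ A := fun h => hwS (hAS h)
      have h1 := idx_lt v
      have h2 := idx_notA w hwA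
      push_cast
      omega
    · have h1 := idx_notB v hvB
      have h2 : 0 ≤ (L.idxOf w : ℤ) := Int.natCast_nonneg _
      push_cast
      omega
  intro v w hadj
  have h1 := main v w hadj
  have h2 := main w v hadj.symm
  have hkN : k ≤ N := by omega
  have hval1 : ((e.symm.trans (finCongr hlenL)) v : ℤ) = (L.idxOf v : ℤ) := by
    exact_mod_cast congrArg (Nat.cast : ℕ → ℤ) (hidx v)
  have hval2 : ((e.symm.trans (finCongr hlenL)) w : ℤ) = (L.idxOf w : ℤ) := by
    exact_mod_cast congrArg (Nat.cast : ℕ → ℤ) (hidx w)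
  rw [hval1, hval2]
  omega
end

section
/- For n ≥ 2r, the bandwidth of the Kneser graph K(n,r) satisfies B(K(n,r)) ≤ C(n,r) - ⌊C(n-1,r-1)/2⌋. -/
/-- The Kneser graph `K(n,r)`: vertices are `r`-subsets of `[n]`,
adjacent iff disjoint. -/
def kneser (n r : ℕ) : SimpleGraph {A : Finset (Fin n) // A.card = r} where
  Adj A B := Disjoint A.val B.val ∧ A ≠ B
  symm := by constructor; intro A B h; exact ⟨h.1.symm, h.2.symm⟩
  loopless := by constructor; intro A h; exact h.2 rfl

lemma exists_indep (n r : ℕ) (h : 2 * r ≤ n) :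
    ∃ T : Finset {A : Finset (Fin n) // A.card = r},
      T.card = (n - 1).choose (r - 1) ∧
      ∀ v ∈ T, ∀ w ∈ T, ¬ (kneser n r).Adj v w := by
  classical
  rcases Nat.eq_zero_or_pos r with hr | hr
  · subst hr
    refine ⟨{⟨∅, by simp⟩}, by simp, ?_⟩
    intro v hv w hw hadj
    simp only [Finset.mem_singleton] at hv hw
    exact hadj.2 (hv.trans hw.symm)
  · have hn : 1 ≤ n := by omega
    set z : Fin n := ⟨0, by omega⟩ with hz
    set S : Finset {A : Finset (Fin n) // A.card = r} :=
      Finset.univ.filter (fun v => z ∈ v.1) with hS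
    obtain ⟨D, hD, hDcard⟩ := Finset.exists_subset_card_eq
      (show r ≤ (Finset.univ : Finset (Fin n)).card by simp; omega)
    set v₀ : {A : Finset (Fin n) // A.card = r} := ⟨D, hDcard⟩ with hv₀
    have hmem : ∀ B ∈ (Finset.univ.erase z).powersetCard (r - 1),
        z ∉ B ∧ (insert z B).card = r := by
      intro B hB
      rw [Finset.mem_powersetCard] at hB
      have hzB : z ∉ B := fun hzB => (Finset.mem_erase.mp (hB.1 hzB)).1 rfl
      exact ⟨hzB, by rw [Finset.card_insert_of_notMem hzB, hB.2]; omega⟩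
    have hcard : (n - 1).choose (r - 1) ≤ S.card := by
      have := Finset.card_le_card_of_injOn
        (f := fun B : Finset (Fin n) =>
          if hB : B ∈ (Finset.univ.erase z).powersetCard (r - 1) then
            (⟨insert z B, (hmem B hB).2⟩ : {A : Finset (Fin n) // A.card = r})
          else v₀)
        (s := (Finset.univ.erase z).powersetCard (r - 1)) (t := S) ?_ ?_
      · calc (n-1).choose (r-1)
            = ((Finset.univ.erase z).powersetCard (r-1)).card := by
              rw [Finset.card_powersetCard, Finset.card_erase_of_mem (Finset.mem_univ z),
                Finset.card_univ, Fintype.card_fin]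
          _ ≤ S.card := this
      · intro B hB
        simp only [Finset.mem_coe.mp hB, dif_pos, hS, Finset.mem_coe, Finset.mem_filter]
        exact ⟨Finset.mem_univ _, Finset.mem_insert_self z B⟩
      · intro B hB C hC hBC
        have hB' := Finset.mem_coe.mp hB
        have hC' := Finset.mem_coe.mp hC
        simp only [hB', hC', dif_pos] at hBC
        have : insert z B = insert z C := congrArg Subtype.val hBC
        rw [← Finset.erase_insert (hmem B hB').1, ← Finset.erase_insert (hmem C hC').1, this]
    obtain ⟨T, hTS, hTcard⟩ := Finset.exists_subset_card_eq hcard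
    refine ⟨T, hTcard, ?_⟩
    intro v hv w hw hadj
    have hvz : z ∈ v.1 := (Finset.mem_filter.mp (hTS hv)).2
    have hwz : z ∈ w.1 := (Finset.mem_filter.mp (hTS hw)).2
    exact (Finset.disjoint_left.mp hadj.1 hvz) hwz

theorem bandwidth_kneser_trivial_upper (n r : ℕ) (h : 2 * r ≤ n) :
    ∃ f : {A : Finset (Fin n) // A.card = r} ≃ Fin (n.choose r),
      ∀ v w, (kneser n r).Adj v w →
        ((f v : ℤ) - (f w : ℤ)).natAbs ≤ n.choose r - (n - 1).choose (r - 1) / 2 := by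
  classical
  set V := {A : Finset (Fin n) // A.card = r}
  set N := n.choose r with hN
  set m := (n - 1).choose (r - 1) with hm
  set k := m / 2 with hk
  have hNcard : Fintype.card V = N := by
    exact (Fintype.card_finset_len (α := Fin n) r).trans (by rw [Fintype.card_fin])
  obtain ⟨T, hTcard, hTindep⟩ := exists_indep n r h
  have hmN : m ≤ N := by
    have h1 : T.card ≤ Fintype.card V := Finset.card_le_univ T
    have h2 : T.card = m := hTcard
    omega

  have hkm : k ≤ m := Nat.div_le_self m 2
  have h2k : 2 * k ≤ m := Nat.mul_div_le m 2
  obtain ⟨T₁, hT₁T, hT₁card⟩ := Finset.exists_subset_card_eq (show k ≤ T.card by rw [hTcard]; exact hkm)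
  set T₂ : Finset V := T \ T₁ with hT₂
  set M : Finset V := Finset.univ \ T with hM
  have hT₂card : T₂.card = m - k := by
    rw [hT₂, Finset.card_sdiff_of_subset hT₁T, hTcard, hT₁card]
  have hMcard : M.card = N - m := by
    rw [hM, Finset.card_sdiff_of_subset (Finset.subset_univ T), Finset.card_univ, hNcard, hTcard]
  have e₁ : T₁ ≃ Fin k := Finset.equivFinOfCardEq hT₁card
  have e₂ : M ≃ Fin (N - m) := Finset.equivFinOfCardEq hMcard
  have e₃ : T₂ ≃ Fin (m - k) := Finset.equivFinOfCardEq hT₂card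
  set g : V → ℕ := fun v =>
    if h1 : v ∈ T₁ then (e₁ ⟨v, h1⟩ : ℕ)
    else if h2 : v ∈ T then k + (N - m) + (e₃ ⟨v, by rw [hT₂, Finset.mem_sdiff]; exact ⟨h2, h1⟩⟩ : ℕ)
    else k + (e₂ ⟨v, by rw [hM, Finset.mem_sdiff]; exact ⟨Finset.mem_univ v, h2⟩⟩ : ℕ) with hg
  have hvT₂ : ∀ v, v ∉ T₁ → v ∈ T → v ∈ T₂ := fun v h1 h2 => by
    rw [hT₂, Finset.mem_sdiff]; exact ⟨h2, h1⟩
  have hvM : ∀ v, v ∉ T → v ∈ M := fun v h2 => by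
    rw [hM, Finset.mem_sdiff]; exact ⟨Finset.mem_univ v, h2⟩
  have hgT₁ : ∀ v (h1 : v ∈ T₁), g v = (e₁ ⟨v, h1⟩ : ℕ) := by
    intro v h1; simp only [hg]; rw [dif_pos h1]
  have hgT₂ : ∀ v (h1 : v ∉ T₁) (h2 : v ∈ T),
      g v = k + (N - m) + (e₃ ⟨v, hvT₂ v h1 h2⟩ : ℕ) := by
    intro v h1 h2; simp only [hg]; rw [dif_neg h1, dif_pos h2]
  have hgM : ∀ v (h1 : v ∉ T₁) (h2 : v ∉ T),
      g v = k + (e₂ ⟨v, hvM v h2⟩ : ℕ) := by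
    intro v h1 h2; simp only [hg]; rw [dif_neg h1, dif_neg h2]
  have hr₁ : ∀ v, v ∈ T₁ → g v < k := by
    intro v h1; rw [hgT₁ v h1]; exact (e₁ ⟨v, h1⟩).isLt
  have hr₂ : ∀ v, v ∉ T₁ → v ∈ T → k + (N - m) ≤ g v ∧ g v < N := by
    intro v h1 h2; rw [hgT₂ v h1 h2]
    have := (e₃ ⟨v, hvT₂ v h1 h2⟩).isLt; omega
  have hrM : ∀ v, v ∉ T₁ → v ∉ T → k ≤ g v ∧ g v < k + (N - m) := by
    intro v h1 h2; rw [hgM v h1 h2]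
    have := (e₂ ⟨v, hvM v h2⟩).isLt; omega
  have hT₁sub : ∀ v, v ∈ T₁ → v ∈ T := fun v hv => hT₁T hv
  have hglt : ∀ v, g v < N := by
    intro v
    by_cases h1 : v ∈ T₁
    · have := hr₁ v h1; omega
    · by_cases h2 : v ∈ T
      · exact (hr₂ v h1 h2).2
      · have := (hrM v h1 h2).2; omega
  have hginj : Function.Injective g := by
    intro v w hvw
    by_cases h1 : v ∈ T₁
    · by_cases h2 : w ∈ T₁
      · have : (⟨v, h1⟩ : T₁) = ⟨w, h2⟩ := e₁.injective (Fin.ext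
          (by rw [← hgT₁ v h1, ← hgT₁ w h2, hvw]))
        exact congrArg Subtype.val this
      · by_cases h3 : w ∈ T
        · have := hr₁ v h1; have := (hr₂ w h2 h3).1; omega
        · have := hr₁ v h1; have := (hrM w h2 h3).1; omega
    · by_cases h2 : w ∈ T₁
      · by_cases h3 : v ∈ T
        · have := hr₁ w h2; have := (hr₂ v h1 h3).1; omega
        · have := hr₁ w h2; have := (hrM v h1 h3).1; omega
      · by_cases h3 : v ∈ T <;> by_cases h4 : w ∈ T
        · have heq : (e₃ ⟨v, hvT₂ v h1 h3⟩ : ℕ) = (e₃ ⟨w, hvT₂ w h2 h4⟩ : ℕ) := by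
            have := hgT₂ v h1 h3; have := hgT₂ w h2 h4; omega
          have : (⟨v, _⟩ : T₂) = ⟨w, _⟩ := e₃.injective (Fin.ext heq)
          exact congrArg Subtype.val this
        · have := (hr₂ v h1 h3).1; have := (hrM w h2 h4).2; omega
        · have := (hr₂ w h2 h4).1; have := (hrM v h1 h3).2; omega
        · have heq : (e₂ ⟨v, hvM v h3⟩ : ℕ) = (e₂ ⟨w, hvM w h4⟩ : ℕ) := by
            have := hgM v h1 h3; have := hgM w h2 h4; omega
          have : (⟨v, _⟩ : M) = ⟨w, _⟩ := e₂.injective (Fin.ext heq)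
          exact congrArg Subtype.val this
  set g' : V → Fin N := fun v => ⟨g v, hglt v⟩ with hg'
  have hbij : Function.Bijective g' := by
    rw [Fintype.bijective_iff_injective_and_card]
    constructor
    · intro v w hvw
      exact hginj (congrArg Fin.val hvw)
    · rw [hNcard, Fintype.card_fin]
  refine ⟨Equiv.ofBijective g' hbij, ?_⟩
  intro v w hadj
  show ((g' v : ℤ) - (g' w : ℤ)).natAbs ≤ N - k
  have hvN := hglt v
  have hwN := hglt w
  -- key: g v < k → v ∈ T, and g v ≥ k + (N - m) → v ∈ T
  have key : ∀ u, g u < k ∨ k + (N - m) ≤ g u → u ∈ T := by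
    intro u hu
    by_contra huT
    have h1 : u ∉ T₁ := fun h' => huT (hT₁sub u h')
    have := hrM u h1 huT
    omega
  have hnot : ¬ (v ∈ T ∧ w ∈ T) := fun ⟨hv, hw⟩ => hTindep v hv w hw hadj
  have hgv : (g' v : ℤ) = (g v : ℤ) := rfl
  have hgw : (g' w : ℤ) = (g w : ℤ) := rfl
  rw [hgv, hgw]
  by_contra hcon
  push_neg at hcon
  have hd : N - k < ((g v : ℤ) - (g w : ℤ)).natAbs := hcon
  have habs : ((g v : ℤ) - (g w : ℤ)).natAbs = max (g v) (g w) - min (g v) (g w) := by omega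
  -- derive both endpoints in T
  have : v ∈ T ∧ w ∈ T := by
    constructor <;> [apply key v; apply key w] <;> omega
  exact hnot this
end

section
/- Let f: V(K(n,r)) → {1,...,C(n,r)} be a bijection and let F, G ⊆ {1,...,C(n,r)} with F = [x,y] an interval, G = [u, C(n,r)] a terminal interval, and suppose that for every v with f-label in F and every w with f-label in G, the r-sets v and w intersect (F and G are cross-intersecting via f). Then for every edge vw of K(n,r) with f(v) ∈ F or f(w) ∈ F, we have |f(v) - f(w)| ≤ max{y - 1, C(n,r) - (|G| + x)}. -/
theorem blocked_intervals (n r x y u : ℕ)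
    (f : {A : Finset (Fin n) // A.card = r} ≃ Fin (n.choose r))
    (hx : 1 ≤ x) (hxy : x ≤ y) (hu : u ≤ n.choose r)
    (hcross : ∀ v w : {A : Finset (Fin n) // A.card = r},
      ((f v : ℕ) + 1) ∈ Set.Icc x y → ((f w : ℕ) + 1) ∈ Set.Icc u (n.choose r) →
      ¬ Disjoint v.val w.val) :
    ∀ v w : {A : Finset (Fin n) // A.card = r}, (kneser n r).Adj v w →
      (((f v : ℕ) + 1) ∈ Set.Icc x y ∨ ((f w : ℕ) + 1) ∈ Set.Icc x y) →
      ((f v : ℤ) - (f w : ℤ)).natAbs ≤ max (y - 1) (n.choose r - ((n.choose r - u + 1) + x)) := by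
  intro v w hadj hF
  have hvN : (f v : ℕ) < n.choose r := (f v).2
  have hwN : (f w : ℕ) < n.choose r := (f w).2
  rcases hF with hF | hF
  · have hwG : ¬ ((f w : ℕ) + 1) ∈ Set.Icc u (n.choose r) :=
      fun hG => hcross v w hF hG hadj.1
    simp only [Set.mem_Icc, not_and, not_le] at hF hwG
    omega
  · have hvG : ¬ ((f v : ℕ) + 1) ∈ Set.Icc u (n.choose r) :=
      fun hG => hcross w v hF hG hadj.1.symm
    simp only [Set.mem_Icc, not_and, not_le] at hF hvG
    omega
end

section
/- Let u, v, w be distinct elements of [n] and let E, E' be two (r-1)-subsets of [n] with E ∩ E' = {w}, where u, v ∉ E ∪ E'. Then the number of r-subsets C of [n] with u, v ∈ C, C ∩ E ≠ ∅, and C ∩ E' ≠ ∅ is at most C(n-3,r-3) + (r-2)^2 · C(n-4,r-4). -/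
set_option maxHeartbeats 1000000

open Finset

theorem count_uv_meeting_two_sets_sharing_w (n r : ℕ) (hr : 4 ≤ r)
    (u v w : Fin n) (huv : u ≠ v) (huw : u ≠ w) (hvw : v ≠ w)
    (E E' : Finset (Fin n)) (hE : E.card = r - 1) (hE' : E'.card = r - 1)
    (hinter : E ∩ E' = {w}) (hu : u ∉ E ∪ E') (hv : v ∉ E ∪ E') :
    (Finset.univ.filter (fun C : Finset (Fin n) =>
        C.card = r ∧ u ∈ C ∧ v ∈ C ∧ ¬ Disjoint C E ∧ ¬ Disjoint C E')).card
      ≤ (n - 3).choose (r - 3) + (r - 2) ^ 2 * (n - 4).choose (r - 4) := by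
  classical
  have huE : u ∉ E := fun h => hu (mem_union_left _ h)
  have huE' : u ∉ E' := fun h => hu (mem_union_right _ h)
  have hvE : v ∉ E := fun h => hv (mem_union_left _ h)
  have hvE' : v ∉ E' := fun h => hv (mem_union_right _ h)
  have hwE : w ∈ E := by
    have : w ∈ E ∩ E' := by rw [hinter]; exact mem_singleton_self w
    exact (mem_inter.mp this).1
  have hwE' : w ∈ E' := by
    have : w ∈ E ∩ E' := by rw [hinter]; exact mem_singleton_self w
    exact (mem_inter.mp this).2
  set P := Finset.univ.filter (fun C : Finset (Fin n) =>
        C.card = r ∧ u ∈ C ∧ v ∈ C ∧ ¬ Disjoint C E ∧ ¬ Disjoint C E') with hPdef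
  have hsplit : (P.filter (fun C => w ∈ C)).card
      + (P.filter (fun C => w ∉ C)).card = P.card :=
    Finset.card_filter_add_card_filter_not (fun C => w ∈ C)
  -- Part A: sets containing w
  have hA : (P.filter (fun C => w ∈ C)).card ≤ (n - 3).choose (r - 3) := by
    have hcard3 : ({u, v, w} : Finset (Fin n)).card = 3 := by
      rw [card_insert_of_notMem (by simp [huv, huw]),
        card_insert_of_notMem (by simp [hvw]), card_singleton]
    have step : (P.filter (fun C => w ∈ C)).card
        ≤ ((Finset.univ \ {u, v, w}).powersetCard (r - 3)).card := by
      apply Finset.card_le_card_of_injOn (fun C => C \ {u, v, w})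
      · intro C hC
        simp only [mem_coe, mem_filter, hPdef] at hC
        obtain ⟨⟨_, hCr, huC, hvC, _, _⟩, hwC⟩ := hC
        have hsub : ({u, v, w} : Finset (Fin n)) ⊆ C := by
          intro x hx
          simp only [mem_insert, mem_singleton] at hx
          rcases hx with rfl | rfl | rfl <;> assumption
        rw [mem_coe, mem_powersetCard]
        constructor
        · exact sdiff_subset_sdiff (subset_univ C) le_rfl
        · rw [card_sdiff_of_subset hsub, hcard3, hCr]
      · intro C1 h1 C2 h2 h
        simp only [coe_filter, Set.mem_setOf_eq, hPdef, mem_filter] at h1 h2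
        have hs1 : ({u, v, w} : Finset (Fin n)) ⊆ C1 := by
          intro x hx
          simp only [mem_insert, mem_singleton] at hx
          rcases hx with rfl | rfl | rfl
          exacts [h1.1.2.2.1, h1.1.2.2.2.1, h1.2]
        have hs2 : ({u, v, w} : Finset (Fin n)) ⊆ C2 := by
          intro x hx
          simp only [mem_insert, mem_singleton] at hx
          rcases hx with rfl | rfl | rfl
          exacts [h2.1.2.2.1, h2.1.2.2.2.1, h2.2]
        have := congrArg (· ∪ ({u, v, w} : Finset (Fin n))) h
        simpa [sdiff_union_of_subset hs1, sdiff_union_of_subset hs2] using this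
    calc (P.filter (fun C => w ∈ C)).card
        ≤ ((Finset.univ \ {u, v, w}).powersetCard (r - 3)).card := step
      _ = (n - 3).choose (r - 3) := by
          rw [card_powersetCard, card_sdiff_of_subset (subset_univ _), hcard3, card_univ,
            Fintype.card_fin]
  -- Part B: sets avoiding w
  have hB : (P.filter (fun C => w ∉ C)).card ≤ (r - 2) ^ 2 * (n - 4).choose (r - 4) := by
    have hsubB : P.filter (fun C => w ∉ C) ⊆ ((E.erase w) ×ˢ (E'.erase w)).biUnion
        (fun p => ((Finset.univ \ {u, v, p.1, p.2}).powersetCard (r - 4)).image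
          (fun S => insert u (insert v (insert p.1 (insert p.2 S))))) := by
      intro C hC
      simp only [mem_filter, hPdef] at hC
      obtain ⟨⟨_, hCr, huC, hvC, hdE, hdE'⟩, hwC⟩ := hC
      have hne : (C ∩ E).Nonempty := not_disjoint_iff_nonempty_inter.mp hdE
      have hne' : (C ∩ E').Nonempty := not_disjoint_iff_nonempty_inter.mp hdE'
      set e := (C ∩ E).min' hne with he_def
      set e' := (C ∩ E').min' hne' with he'_def
      have heC : e ∈ C := (mem_inter.mp ((C ∩ E).min'_mem hne)).1
      have heE : e ∈ E := (mem_inter.mp ((C ∩ E).min'_mem hne)).2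
      have he'C : e' ∈ C := (mem_inter.mp ((C ∩ E').min'_mem hne')).1
      have he'E' : e' ∈ E' := (mem_inter.mp ((C ∩ E').min'_mem hne')).2
      have hew : e ≠ w := fun h => hwC (h ▸ heC)
      have he'w : e' ≠ w := fun h => hwC (h ▸ he'C)
      have hee' : e ≠ e' := by
        intro h
        have : e ∈ E ∩ E' := mem_inter.mpr ⟨heE, h ▸ he'E'⟩
        rw [hinter, mem_singleton] at this
        exact hew this
      have hue : u ≠ e := fun h => huE (h ▸ heE)
      have hue' : u ≠ e' := fun h => huE' (h ▸ he'E')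
      have hve : v ≠ e := fun h => hvE (h ▸ heE)
      have hve' : v ≠ e' := fun h => hvE' (h ▸ he'E')
      have hcard4 : ({u, v, e, e'} : Finset (Fin n)).card = 4 := by
        rw [card_insert_of_notMem (by simp [huv, hue, hue']),
          card_insert_of_notMem (by simp [hve, hve']),
          card_insert_of_notMem (by simp [hee']), card_singleton]
      have hsub4 : ({u, v, e, e'} : Finset (Fin n)) ⊆ C := by
        intro x hx
        simp only [mem_insert, mem_singleton] at hx
        rcases hx with rfl | rfl | rfl | rfl <;> assumption
      rw [mem_biUnion]
      refine ⟨(e, e'), ?_, ?_⟩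
      · exact mem_product.mpr ⟨mem_erase.mpr ⟨hew, heE⟩, mem_erase.mpr ⟨he'w, he'E'⟩⟩
      · rw [mem_image]
        refine ⟨C \ {u, v, e, e'}, ?_, ?_⟩
        · rw [mem_powersetCard]
          exact ⟨sdiff_subset_sdiff (subset_univ C) le_rfl,
            by rw [card_sdiff_of_subset hsub4, hcard4, hCr]⟩
        · have : insert u (insert v (insert e (insert e' (C \ {u, v, e, e'}))))
              = ({u, v, e, e'} : Finset (Fin n)) ∪ (C \ {u, v, e, e'}) := by
            rw [insert_union, insert_union, insert_union, ← insert_eq]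
          rw [this, union_sdiff_of_subset hsub4]
    calc (P.filter (fun C => w ∉ C)).card
        ≤ (((E.erase w) ×ˢ (E'.erase w)).biUnion
            (fun p => ((Finset.univ \ {u, v, p.1, p.2}).powersetCard (r - 4)).image
              (fun S => insert u (insert v (insert p.1 (insert p.2 S)))))).card :=
          card_le_card hsubB
      _ ≤ ∑ p ∈ (E.erase w) ×ˢ (E'.erase w),
            (((Finset.univ \ {u, v, p.1, p.2}).powersetCard (r - 4)).image
              (fun S => insert u (insert v (insert p.1 (insert p.2 S))))).card :=
          card_biUnion_le
      _ ≤ ∑ _p ∈ (E.erase w) ×ˢ (E'.erase w), (n - 4).choose (r - 4) := by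
          apply Finset.sum_le_sum
          intro p hp
          obtain ⟨hp1, hp2⟩ := mem_product.mp hp
          obtain ⟨hp1w, hp1E⟩ := mem_erase.mp hp1
          obtain ⟨hp2w, hp2E'⟩ := mem_erase.mp hp2
          have hee' : p.1 ≠ p.2 := by
            intro h
            have : p.1 ∈ E ∩ E' := mem_inter.mpr ⟨hp1E, h ▸ hp2E'⟩
            rw [hinter, mem_singleton] at this
            exact hp1w this
          have hue : u ≠ p.1 := fun h => huE (h ▸ hp1E)
          have hue' : u ≠ p.2 := fun h => huE' (h ▸ hp2E')
          have hve : v ≠ p.1 := fun h => hvE (h ▸ hp1E)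
          have hve' : v ≠ p.2 := fun h => hvE' (h ▸ hp2E')
          have hcard4 : ({u, v, p.1, p.2} : Finset (Fin n)).card = 4 := by
            rw [card_insert_of_notMem (by simp [huv, hue, hue']),
              card_insert_of_notMem (by simp [hve, hve']),
              card_insert_of_notMem (by simp [hee']), card_singleton]
          calc (((Finset.univ \ {u, v, p.1, p.2}).powersetCard (r - 4)).image
                (fun S => insert u (insert v (insert p.1 (insert p.2 S))))).card
              ≤ ((Finset.univ \ {u, v, p.1, p.2}).powersetCard (r - 4)).card :=
                card_image_le
            _ = (n - 4).choose (r - 4) := by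
                rw [card_powersetCard, card_sdiff_of_subset (subset_univ _), hcard4, card_univ,
                  Fintype.card_fin]
      _ = ((E.erase w).card * (E'.erase w).card) * (n - 4).choose (r - 4) := by
          rw [Finset.sum_const, card_product, smul_eq_mul]
      _ = (r - 2) ^ 2 * (n - 4).choose (r - 4) := by
          rw [card_erase_of_mem hwE, card_erase_of_mem hwE', hE, hE']
          have : r - 1 - 1 = r - 2 := by omega
          rw [this, sq]
  omega
end
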